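/- Let 0 < p ≤ 1. Let {(w^k, λ^k, ζ^k, β^k)} ⊆ ℝⁿ × ℝ^r × ℝⁿ × ℝ^r be a sequence produced by the smoothing method: there are sequences μ_k > 0 with μ_k → 0 and ε̂_k ≥ 0 with ε̂_k → 0 such that for every k, (w^k, λ^k, ζ^k, β^k) is an ε̂_{k−1}-approximate KKT point of the smoothed one-level problem with smoothing parameter μ_{k−1}. Suppose Assumptions A1–A4 hold. Then {(w^k, λ^k, ζ^k, β^k)} has at least one accumulation point, and every accumulation point (w*, λ*, ζ*, β*) satisfies: (1) ζ_i* = 0 for all i ∈ I(w*), and (2) p Σ_{i∉I(w*)} sgn(w_i*) |w_i*|^{p−1} ζ_i* = β₁*. -/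

import Mathlib

open Filter Topology Finset

/-- Partial derivative `∂h/∂wᵢ (w)`. -/
noncomputable def pd {n : ℕ} (h : (Fin n → ℝ) → ℝ) (w : Fin n → ℝ) (i : Fin n) : ℝ :=
  fderiv ℝ h w (Pi.single i 1)

/-- Second partial derivative `∂²h/∂wᵢ∂wⱼ (w)`. -/
noncomputable def pd2 {n : ℕ} (h : (Fin n → ℝ) → ℝ) (w : Fin n → ℝ) (i j : Fin n) : ℝ :=
  pd (fun x => pd h x j) w i

/-- `(∇φ_μ)ᵢ` at a scalar coordinate `x`: `p x (x² + μ²)^{p/2−1}`. -/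
noncomputable def dphi (p μ x : ℝ) : ℝ := p * x * (x ^ 2 + μ ^ 2) ^ (p / 2 - 1)

/-- `(∇²φ_μ)ᵢᵢ` at a scalar coordinate `x`:
`p (x² + μ²)^{p/2−1} + p(p−2) x² (x² + μ²)^{p/2−2}`. -/
noncomputable def d2phi (p μ x : ℝ) : ℝ :=
  p * (x ^ 2 + μ ^ 2) ^ (p / 2 - 1) + p * (p - 2) * x ^ 2 * (x ^ 2 + μ ^ 2) ^ (p / 2 - 2)

/-- `(w, λ, ζ, β)` is an `ε̂`-approximate KKT point of the smoothed one-level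
problem with smoothing parameter `μ`. -/
def ApproxKKT {n r : ℕ} [NeZero r] (p : ℝ)
    (f : (Fin n → ℝ) → ℝ) (R : Fin r → (Fin n → ℝ) → ℝ)
    (G : (Fin n → ℝ) → (Fin r → ℝ) → ℝ)
    (w : Fin n → ℝ) (lam : Fin r → ℝ) (zeta : Fin n → ℝ) (beta : Fin r → ℝ)
    (μ εhat : ℝ) : Prop :=
  ∃ (e1 : Fin n → ℝ) (e2 : ℝ) (e3 : Fin r → ℝ) (e4 : Fin n → ℝ) (e5 : ℝ),
    (∀ i, pd f w i
        + ((∑ j, pd2 (fun x => G x lam) w i j * zeta j)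
          + lam 0 * d2phi p μ (w i) * zeta i) = e1 i) ∧
    ((∑ i, dphi p μ (w i) * zeta i) - beta 0 = e2) ∧
    (∀ i : Fin r, i ≠ 0 → (∑ j, pd (R i) w j * zeta j) - beta i = e3 i) ∧
    (∀ i, pd (fun x => G x lam) w i + lam 0 * dphi p μ (w i) = e4 i) ∧
    (∀ i, 0 ≤ lam i) ∧ (∀ i, 0 ≤ beta i) ∧ ((∑ i, lam i * beta i) = e5) ∧
    Real.sqrt ((∑ i, (e1 i) ^ 2) + e2 ^ 2
        + (∑ i ∈ univ.filter (fun i : Fin r => i ≠ 0), (e3 i) ^ 2)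
        + (∑ i, (e4 i) ^ 2) + e5 ^ 2) ≤ εhat

/-- The constraint function `Φᵢ(w, λ) = ∂G/∂wᵢ(w, λ̄) + p sgn(wᵢ) λ₁ |wᵢ|^{p−1}`
seen as a function on `ℝⁿ × ℝʳ`. -/
noncomputable def PhiC {n r : ℕ} [NeZero r] (p : ℝ)
    (G : (Fin n → ℝ) → (Fin r → ℝ) → ℝ) (i : Fin n)
    (x : (Fin n → ℝ) × (Fin r → ℝ)) : ℝ :=
  pd (fun w => G w x.2) x.1 i + p * Real.sign (x.1 i) * x.2 0 * |x.1 i| ^ (p - 1)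

/-- The gradient of `Φᵢ` with respect to `(w, λ)`, written blockwise. -/
noncomputable def gradPhiC {n r : ℕ} [NeZero r] (p : ℝ)
    (G : (Fin n → ℝ) → (Fin r → ℝ) → ℝ) (i : Fin n)
    (x : (Fin n → ℝ) × (Fin r → ℝ)) : (Fin n → ℝ) × (Fin r → ℝ) :=
  (fun j => fderiv ℝ (PhiC p G i) x (Pi.single j 1, 0),
   fun j => fderiv ℝ (PhiC p G i) x (0, Pi.single j 1))

/-- The LICQ (Assumption A4) at `(w*, λ*)`: the gradients `∇Φᵢ(w*, λ*)` for
`i ∉ I(w*)`, together with the coordinate vectors `eᵢ^{(w)}` for `i ∈ I(w*)` and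
`eᵢ^{(λ)}` for `i ∈ I(λ*)`, are linearly independent in `ℝⁿ × ℝʳ`. -/
def LICQ {n r : ℕ} [NeZero r] (p : ℝ)
    (G : (Fin n → ℝ) → (Fin r → ℝ) → ℝ)
    (wstar : Fin n → ℝ) (lamstar : Fin r → ℝ) : Prop :=
  LinearIndependent ℝ
    (Sum.elim (fun i : {i : Fin n // wstar i ≠ 0} => gradPhiC p G i.1 (wstar, lamstar))
      (Sum.elim
        (fun i : {i : Fin n // wstar i = 0} =>
          ((Pi.single i.1 1, 0) : (Fin n → ℝ) × (Fin r → ℝ)))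
        (fun j : {j : Fin r // lamstar j = 0} =>
          ((0, Pi.single j.1 1) : (Fin n → ℝ) × (Fin r → ℝ)))))

-- ===== auxiliary lemmas =====
lemma ult_lim (U : Ultrafilter ℕ) {f : ℕ → ℝ} {b : ℝ}
    (hb : ∀ᶠ k in (U : Filter ℕ), |f k| ≤ b) : ∃ l, |l| ≤ b ∧ Tendsto f (↑U) (𝓝 l) := by
  have hmem : (Set.Icc (-b) b) ∈ Filter.map f (U : Filter ℕ) := by
    rw [Filter.mem_map]
    filter_upwards [hb] with k hk
    simpa [Set.mem_Icc] using abs_le.1 hk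
  obtain ⟨l, hl, hle⟩ := (isCompact_Icc (a := -b) (b := b)).ultrafilter_le_nhds
    (U.map f) (by rwa [Filter.le_principal_iff])
  exact ⟨l, abs_le.2 ⟨hl.1, hl.2⟩, hle⟩

lemma ult_dichotomy (U : Ultrafilter ℕ) (f : ℕ → ℝ) (hf : ∀ k, 0 ≤ f k) :
    Tendsto f (↑U) atTop ∨ ∃ b, ∀ᶠ k in (U : Filter ℕ), |f k| ≤ b := by
  by_cases h : Tendsto f (↑U) atTop
  · exact Or.inl h
  · right
    rw [tendsto_atTop] at h
    push_neg at h
    obtain ⟨b, hb⟩ := h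
    refine ⟨max b 0, ?_⟩
    have : ∀ᶠ k in (U : Filter ℕ), ¬ b ≤ f k := hb.mono fun k hk => not_le.2 hk
    filter_upwards [this] with k hk
    rw [abs_of_nonneg (hf k)]
    exact le_max_of_le_left (le_of_not_ge hk)

lemma core_blowup (U : Ultrafilter ℕ) {p : ℝ} (hp : 0 < p) (hp1 : p ≤ 1)
    {x μ lam1 : ℕ → ℝ} {a l : ℝ}
    (hμpos : ∀ k, 0 < μ k)
    (hx : Tendsto x (↑U) (𝓝 0)) (hμ : Tendsto μ (↑U) (𝓝 0))
    (hlam : Tendsto lam1 (↑U) (𝓝 l)) (hl : 0 < l)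
    (ha : Tendsto (fun k => lam1 k * dphi p (μ k) (x k)) (↑U) (𝓝 a))
    (hp1a : p = 1 → l ≠ |a|) :
    Tendsto (fun k => |d2phi p (μ k) (x k)|) (↑U) atTop := by
  by_contra hcon
  obtain ⟨b, hb⟩ := (ult_dichotomy U _ (fun k => abs_nonneg _)).resolve_left hcon
  set t : ℕ → ℝ := fun k => x k ^ 2 + μ k ^ 2 with ht_def
  have htpos : ∀ k, 0 < t k := fun k => by have := hμpos k; positivity
  have ht0 : Tendsto t (↑U) (𝓝 0) := by
    have := (hx.mul hx).add (hμ.mul hμ)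
    simpa [ht_def, pow_two] using this
  have h2p : (0:ℝ) < 2 - p := by linarith
  have hI1 : ∀ k, d2phi p (μ k) (x k) = p * t k ^ (p/2 - 2) * ((p-1) * x k ^ 2 + μ k ^ 2) := by
    intro k
    have htne : t k ≠ 0 := (htpos k).ne'
    have h1 : t k ^ (p/2 - 1) = t k ^ (p/2 - 2) * t k := by
      rw [← Real.rpow_add_one htne]; ring_nf
    simp only [d2phi, ht_def] at *
    rw [h1]; ring
  set u : ℕ → ℝ := fun k => μ k ^ 2 / t k with hu_def
  have hI2 : ∀ k, |(p-1) + (2-p) * u k| = |d2phi p (μ k) (x k)| * t k ^ (1 - p/2) / p := by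
    intro k
    have htpos' := htpos k
    have htne : t k ≠ 0 := htpos'.ne'
    have hA : (p-1) + (2-p) * u k = ((p-1) * x k ^ 2 + μ k ^ 2) / t k := by
      rw [hu_def]
      field_simp
      ring
    have hpow : t k ^ (p / 2 - 2) * t k ^ (1 - p/2) = (t k)⁻¹ := by
      rw [← Real.rpow_add htpos', ← Real.rpow_neg_one (t k)]
      ring_nf
    rw [hA, hI1 k, abs_div, abs_of_pos htpos', abs_mul, abs_mul, abs_of_pos hp,
      abs_of_pos (Real.rpow_pos_of_pos htpos' _)]
    have key : p * t k ^ (p/2-2) * |(p-1) * x k ^ 2 + μ k ^ 2| * t k ^ (1-p/2) / p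
        = |(p-1) * x k ^ 2 + μ k ^ 2| * (t k ^ (p/2-2) * t k ^ (1-p/2)) := by
      field_simp
    rw [key, hpow, div_eq_mul_inv]
  have hupos : Tendsto (fun k => (p-1) + (2-p) * u k) (↑U) (𝓝 0) := by
    apply squeeze_zero_norm' (a := fun k => (b/p) * t k ^ (1 - p/2))
    · filter_upwards [hb] with k hk
      rw [Real.norm_eq_abs, hI2 k]
      have h1 : (0:ℝ) ≤ t k ^ (1 - p/2) := (Real.rpow_pos_of_pos (htpos k) _).le
      rw [div_le_iff₀ hp]
      have h3 : b / p * t k ^ (1-p/2) * p = b * t k ^ (1-p/2) := by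
        field_simp
      rw [h3]
      apply mul_le_mul_of_nonneg_right _ h1
      simpa [abs_abs] using hk
    · have h1 : Tendsto (fun k => t k ^ (1 - p/2)) (↑U) (𝓝 0) := by
        have hc : ContinuousAt (fun y : ℝ => y ^ (1 - p/2)) 0 :=
          Real.continuousAt_rpow_const 0 _ (Or.inr (by linarith))
        have := hc.tendsto.comp ht0
        simpa [Function.comp_def, Real.zero_rpow (show (1 : ℝ) - p/2 ≠ 0 by intro h; linarith [hp1])] using this
      simpa using (tendsto_const_nhds (x := b/p)).mul h1
  have hu : Tendsto u (↑U) (𝓝 ((1-p)/(2-p))) := by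
    have : Tendsto (fun k => (((p-1) + (2-p) * u k) - (p-1)) / (2-p)) (↑U)
        (𝓝 ((0 - (p-1))/(2-p))) := ((hupos.sub tendsto_const_nhds).div_const _)
    have heq : (fun k => (((p-1) + (2-p) * u k) - (p-1)) / (2-p)) = u := by
      funext k; field_simp; ring
    rw [heq] at this
    convert this using 2
    ring
  have hxt : Tendsto (fun k => x k ^ 2 / t k) (↑U) (𝓝 (1/(2-p))) := by
    have heq : ∀ k, x k ^ 2 / t k = 1 - u k := by
      intro k
      have hne : x k ^ 2 + μ k ^ 2 ≠ 0 := by simpa [ht_def] using (htpos k).ne'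
      rw [hu_def]
      simp only [ht_def]
      field_simp
      ring
    have : Tendsto (fun k => 1 - u k) (↑U) (𝓝 (1 - (1-p)/(2-p))) :=
      tendsto_const_nhds.sub hu
    have h2 : 1 - (1-p)/(2-p) = 1/(2-p) := by field_simp; ring
    rw [h2] at this
    exact this.congr (fun k => (heq k).symm)
  have hM : ∀ k, (lam1 k * dphi p (μ k) (x k))^2
      = (lam1 k ^ 2 * p^2 * (x k ^ 2 / t k)) * t k ^ (p - 1) := by
    intro k
    have htpos' := htpos k
    have htne : t k ≠ 0 := htpos'.ne'
    have h1 : (t k ^ (p/2 - 1))^(2:ℕ) = t k ^ (p - 2) := by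
      rw [← Real.rpow_natCast (t k ^ (p/2-1)) 2, ← Real.rpow_mul htpos'.le]
      norm_num
      ring_nf
    have h2 : t k ^ (p - 2) * t k = t k ^ (p-1) := by
      rw [← Real.rpow_add_one htne]; ring_nf
    simp only [dphi]
    rw [mul_pow, mul_pow, h1, ← h2]
    field_simp
  have hsq : Tendsto (fun k => (lam1 k * dphi p (μ k) (x k))^2) (↑U) (𝓝 (a^2)) := by
    simpa [pow_two] using ha.mul ha
  have hlam2 : Tendsto (fun k => lam1 k ^ 2) (↑U) (𝓝 (l^2)) := by
    simpa [pow_two] using hlam.mul hlam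
  rcases lt_or_eq_of_le hp1 with hplt | hpeq
  · have htinf : Tendsto (fun k => t k ^ (p - 1)) (↑U) atTop := by
      have h0 : Tendsto (fun k => t k ^ (1 - p)) (↑U) (𝓝[>] 0) := by
        rw [tendsto_nhdsWithin_iff]
        constructor
        · have hc : ContinuousAt (fun y : ℝ => y ^ (1 - p)) 0 :=
            Real.continuousAt_rpow_const 0 _ (Or.inr (by linarith))
          have := hc.tendsto.comp ht0
          simpa [Function.comp_def, Real.zero_rpow (show (1:ℝ) - p ≠ 0 by intro h; linarith)] using this
        · exact Filter.Eventually.of_forall fun k => Real.rpow_pos_of_pos (htpos k) _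
      have := tendsto_inv_nhdsGT_zero.comp h0
      apply this.congr
      intro k
      simp only [Function.comp_apply]
      rw [← Real.rpow_neg (htpos k).le]
      ring_nf
    have hfac : Tendsto (fun k => lam1 k ^ 2 * p^2 * (x k ^ 2 / t k)) (↑U)
        (𝓝 (l^2 * p^2 * (1/(2-p)))) :=
      (hlam2.mul (tendsto_const_nhds (x := p^2))).mul hxt
    have hinf : Tendsto (fun k => (lam1 k * dphi p (μ k) (x k))^2) (↑U) atTop := by
      have hpos : 0 < l^2 * p^2 * (1/(2-p)) := by positivity
      have := Tendsto.pos_mul_atTop hpos hfac htinf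
      exact this.congr (fun k => (hM k).symm)
    exact not_tendsto_nhds_of_tendsto_atTop hinf _ hsq
  · subst hpeq
    have h1 : ∀ k, lam1 k ^2 * (x k ^2 / t k) = (lam1 k * dphi 1 (μ k) (x k))^2 := by
      intro k
      rw [hM k]
      norm_num
    have h2 : Tendsto (fun k => lam1 k ^2 * (x k ^2 / t k)) (↑U) (𝓝 (l^2 * (1/(2-1)))) :=
      hlam2.mul hxt
    have ha2 : a^2 = l^2 := by
      have := tendsto_nhds_unique hsq (h2.congr h1)
      rw [this]; norm_num
    apply hp1a rfl
    have : |a| = Real.sqrt (a^2) := (Real.sqrt_sq_eq_abs a).symm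
    rw [this, ha2, Real.sqrt_sq_eq_abs, abs_of_pos hl]

lemma sign_mul_abs' {c : ℝ} (hc : c ≠ 0) : Real.sign c * |c| = c := by
  rcases lt_or_gt_of_ne hc with h | h
  · rw [Real.sign_of_neg h, abs_of_neg h]; ring
  · rw [Real.sign_of_pos h, abs_of_pos h]; ring

lemma sq_rpow_abs {c : ℝ} (hc : c ≠ 0) (q : ℝ) : (c ^ 2) ^ (q/2) = |c| ^ q := by
  rw [← sq_abs, ← Real.rpow_natCast |c| 2, ← Real.rpow_mul (abs_nonneg c)]
  norm_num
  congr 1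
  ring

lemma tend_dphi {α : Type*} {F : Filter α} {μ x : α → ℝ} {c : ℝ} (p : ℝ) (hc : c ≠ 0)
    (hμ : Tendsto μ F (𝓝 0)) (hx : Tendsto x F (𝓝 c)) :
    Tendsto (fun k => dphi p (μ k) (x k)) F (𝓝 (p * Real.sign c * |c| ^ (p-1))) := by
  have habs : |c| ≠ 0 := abs_ne_zero.2 hc
  have hc2 : c^2 ≠ 0 := pow_ne_zero 2 hc
  have ht : Tendsto (fun k => x k ^ 2 + μ k ^ 2) F (𝓝 (c^2)) := by
    have := ((hx.mul hx).add (hμ.mul hμ))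
    simp only [mul_zero] at this
    simpa [pow_two] using this
  have hr : Tendsto (fun k => (x k ^ 2 + μ k ^ 2) ^ (p/2 - 1)) F (𝓝 ((c^2) ^ (p/2-1))) :=
    ((Real.continuousAt_rpow_const _ _ (Or.inl hc2)).tendsto).comp ht
  have := (tendsto_const_nhds (x := p)).mul hx |>.mul hr
  convert this using 2
  · rfl
  have h1 : (c^2) ^ (p/2 - 1) = |c| ^ (p - 2) := by
    rw [show p/2 - 1 = (p-2)/2 by ring, sq_rpow_abs hc]
  rw [h1]
  have h2 : |c| ^ (p-1) = |c| ^ (p-2) * |c| := by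
    rw [← Real.rpow_add_one habs]; ring_nf
  rw [h2, show p * Real.sign c * (|c| ^ (p-2) * |c|) = p * (Real.sign c * |c|) * |c| ^ (p-2)
    by ring, sign_mul_abs' hc]

lemma tend_d2phi {α : Type*} {F : Filter α} {μ x : α → ℝ} {c : ℝ} (p : ℝ) (hc : c ≠ 0)
    (hμ : Tendsto μ F (𝓝 0)) (hx : Tendsto x F (𝓝 c)) :
    Tendsto (fun k => d2phi p (μ k) (x k)) F (𝓝 (p * (p-1) * |c| ^ (p-2))) := by
  have habs : |c| ≠ 0 := abs_ne_zero.2 hc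
  have hc2 : c^2 ≠ 0 := pow_ne_zero 2 hc
  have ht : Tendsto (fun k => x k ^ 2 + μ k ^ 2) F (𝓝 (c^2)) := by
    have := ((hx.mul hx).add (hμ.mul hμ))
    simp only [mul_zero] at this
    simpa [pow_two] using this
  have hr1 : Tendsto (fun k => (x k ^ 2 + μ k ^ 2) ^ (p/2 - 1)) F (𝓝 ((c^2) ^ (p/2-1))) :=
    ((Real.continuousAt_rpow_const _ _ (Or.inl hc2)).tendsto).comp ht
  have hr2 : Tendsto (fun k => (x k ^ 2 + μ k ^ 2) ^ (p/2 - 2)) F (𝓝 ((c^2) ^ (p/2-2))) :=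
    ((Real.continuousAt_rpow_const _ _ (Or.inl hc2)).tendsto).comp ht
  have hx2 : Tendsto (fun k => x k ^ 2) F (𝓝 (c^2)) := by
    have := hx.mul hx
    simpa [pow_two] using this
  have := ((tendsto_const_nhds (x := p)).mul hr1).add
    ((((tendsto_const_nhds (x := p * (p-2))).mul hx2)).mul hr2)
  convert this using 2
  · rfl
  have h1 : (c^2) ^ (p/2 - 1) = |c| ^ (p - 2) := by
    rw [show p/2 - 1 = (p-2)/2 by ring, sq_rpow_abs hc]
  have h2 : c^2 * (c^2) ^ (p/2 - 2) = |c| ^ (p-2) := by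
    rw [show p/2 - 2 = (p/2 - 1) - 1 by ring, ← h1]
    rw [Real.rpow_sub_one hc2]
    field_simp
  rw [mul_assoc (p * (p-2)), h2, h1]
  ring

lemma sign_mul_self' (c : ℝ) : Real.sign c * c = |c| := by
  rcases lt_trichotomy c 0 with h | h | h
  · rw [Real.sign_of_neg h, abs_of_neg h]; ring
  · simp [h]
  · rw [Real.sign_of_pos h, abs_of_pos h]; ring


section deriv
variable {n r : ℕ} [NeZero r] (g : (Fin n → ℝ) → ℝ) (R : Fin r → (Fin n → ℝ) → ℝ)
  (G : (Fin n → ℝ) → (Fin r → ℝ) → ℝ)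

lemma pd_contDiff {h : (Fin n → ℝ) → ℝ} (hh : ContDiff ℝ 2 h) (i : Fin n) :
    ContDiff ℝ 1 (fun w => pd h w i) := by
  have h1 : ContDiff ℝ 1 (fderiv ℝ h) := hh.fderiv_right (by norm_num)
  exact h1.clm_apply contDiff_const

lemma pd_cont {h : (Fin n → ℝ) → ℝ} (hh : ContDiff ℝ 1 h) (i : Fin n) :
    Continuous (fun w => pd h w i) :=
  (hh.continuous_fderiv one_ne_zero).clm_apply continuous_const

lemma pd2_cont {h : (Fin n → ℝ) → ℝ} (hh : ContDiff ℝ 2 h) (i j : Fin n) :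
    Continuous (fun w => pd2 h w i j) :=
  ((pd_contDiff hh j).continuous_fderiv one_ne_zero).clm_apply continuous_const

variable (hgC : ContDiff ℝ 2 g) (hRC : ∀ i, ContDiff ℝ 2 (R i))
  (hG : ∀ w lam, G w lam = g w + ∑ i ∈ univ.filter (fun i : Fin r => i ≠ 0), lam i * R i w)

include hgC hRC hG in
lemma pdG_eq (lam : Fin r → ℝ) (w : Fin n → ℝ) (i : Fin n) :
    pd (fun x => G x lam) w i
      = pd g w i + ∑ j ∈ univ.filter (fun j : Fin r => j ≠ 0), lam j * pd (R j) w i := by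
  have hfun : (fun x => G x lam)
      = fun x => g x + ∑ j ∈ univ.filter (fun j : Fin r => j ≠ 0), lam j * R j x := by
    funext x; exact hG x lam
  have hdg : DifferentiableAt ℝ g w := (hgC.differentiable (by norm_num)).differentiableAt
  have hdR : ∀ j : Fin r, DifferentiableAt ℝ (fun x => lam j * R j x) w := fun j =>
    (((hRC j).differentiable (by norm_num)).differentiableAt).const_mul _
  have hds : DifferentiableAt ℝ
      (fun x => ∑ j ∈ univ.filter (fun j : Fin r => j ≠ 0), lam j * R j x) w :=
    DifferentiableAt.fun_sum fun j _ => hdR j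
  rw [pd, hfun, fderiv_fun_add hdg hds, fderiv_fun_sum (fun j _ => hdR j)]
  simp only [ContinuousLinearMap.add_apply, ContinuousLinearMap.coe_sum', Finset.sum_apply]
  congr 1
  apply Finset.sum_congr rfl
  intro j _
  rw [fderiv_const_mul (((hRC j).differentiable (by norm_num)).differentiableAt)]
  simp [pd]

include hgC hRC hG in
lemma pd2G_eq (lam : Fin r → ℝ) (w : Fin n → ℝ) (i j : Fin n) :
    pd2 (fun x => G x lam) w i j
      = pd2 g w i j + ∑ j' ∈ univ.filter (fun j' : Fin r => j' ≠ 0), lam j' * pd2 (R j') w i j := by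
  have hfun : (fun x => pd (fun y => G y lam) x j)
      = fun x => pd g x j + ∑ j' ∈ univ.filter (fun j' : Fin r => j' ≠ 0),
          lam j' * pd (R j') x j := by
    funext x; exact pdG_eq g R G hgC hRC hG lam x j
  have hdg : DifferentiableAt ℝ (fun x => pd g x j) w :=
    ((pd_contDiff hgC j).differentiable one_ne_zero).differentiableAt
  have hdR : ∀ j' : Fin r, DifferentiableAt ℝ (fun x => lam j' * pd (R j') x j) w := fun j' =>
    (((pd_contDiff (hRC j') j).differentiable one_ne_zero).differentiableAt).const_mul _
  have hds : DifferentiableAt ℝ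
      (fun x => ∑ j' ∈ univ.filter (fun j' : Fin r => j' ≠ 0), lam j' * pd (R j') x j) w :=
    DifferentiableAt.fun_sum fun j' _ => hdR j'
  rw [pd2, pd, hfun, fderiv_fun_add hdg hds, fderiv_fun_sum (fun j' _ => hdR j')]
  simp only [ContinuousLinearMap.add_apply, ContinuousLinearMap.coe_sum', Finset.sum_apply]
  congr 1
  apply Finset.sum_congr rfl
  intro j' _
  rw [fderiv_const_mul (((pd_contDiff (hRC j') j).differentiable one_ne_zero).differentiableAt)]
  simp [pd2, pd]

include hgC hRC hG in
lemma tend_pdG {α : Type*} {F : Filter α} {W : α → Fin n → ℝ} {Λ : α → Fin r → ℝ}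
    {ws : Fin n → ℝ} {ls : Fin r → ℝ}
    (hW : Tendsto W F (𝓝 ws)) (hΛ : Tendsto Λ F (𝓝 ls)) (i : Fin n) :
    Tendsto (fun k => pd (fun x => G x (Λ k)) (W k) i) F (𝓝 (pd (fun x => G x ls) ws i)) := by
  have h1 : ∀ (lam : Fin r → ℝ) (w : Fin n → ℝ), pd (fun x => G x lam) w i
      = pd g w i + ∑ j ∈ univ.filter (fun j : Fin r => j ≠ 0), lam j * pd (R j) w i :=
    fun lam w => pdG_eq g R G hgC hRC hG lam w i
  simp only [h1]
  apply Tendsto.add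
  · exact ((pd_cont (hgC.of_le (by norm_num)) i).tendsto ws).comp hW
  · apply tendsto_finset_sum
    intro j _
    exact ((tendsto_pi_nhds.1 hΛ j).mul
      (((pd_cont ((hRC j).of_le (by norm_num)) i).tendsto ws).comp hW))

include hgC hRC hG in
lemma tend_pd2G {α : Type*} {F : Filter α} {W : α → Fin n → ℝ} {Λ : α → Fin r → ℝ}
    {ws : Fin n → ℝ} {ls : Fin r → ℝ}
    (hW : Tendsto W F (𝓝 ws)) (hΛ : Tendsto Λ F (𝓝 ls)) (i j : Fin n) :
    Tendsto (fun k => pd2 (fun x => G x (Λ k)) (W k) i j) F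
      (𝓝 (pd2 (fun x => G x ls) ws i j)) := by
  have h1 : ∀ (lam : Fin r → ℝ) (w : Fin n → ℝ), pd2 (fun x => G x lam) w i j
      = pd2 g w i j + ∑ j' ∈ univ.filter (fun j' : Fin r => j' ≠ 0), lam j' * pd2 (R j') w i j :=
    fun lam w => pd2G_eq g R G hgC hRC hG lam w i j
  simp only [h1]
  apply Tendsto.add
  · exact ((pd2_cont hgC i j).tendsto ws).comp hW
  · apply tendsto_finset_sum
    intro j' _
    exact ((tendsto_pi_nhds.1 hΛ j').mul
      (((pd2_cont (hRC j') i j).tendsto ws).comp hW))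

end deriv

section gradsec
variable {n r : ℕ} [NeZero r] (g : (Fin n → ℝ) → ℝ) (R : Fin r → (Fin n → ℝ) → ℝ)
  (G : (Fin n → ℝ) → (Fin r → ℝ) → ℝ)
  (hgC : ContDiff ℝ 2 g) (hRC : ∀ i, ContDiff ℝ 2 (R i))
  (hG : ∀ w lam, G w lam = g w + ∑ i ∈ univ.filter (fun i : Fin r => i ≠ 0), lam i * R i w)

include hgC hRC hG in
lemma gradPhiC_eq {p : ℝ} (hp : 0 < p)
    (i : Fin n) (x1 : Fin n → ℝ) (x2 : Fin r → ℝ) (hx1 : x1 i ≠ 0) :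
    gradPhiC p G i (x1, x2)
      = (fun k => pd2 (fun x => G x x2) x1 k i
            + (if k = i then x2 0 * (p * (p-1) * |x1 i| ^ (p-2)) else 0),
         fun j => if j = 0 then p * Real.sign (x1 i) * |x1 i| ^ (p-1) else pd (R j) x1 i) := by
  classical
  set X : (Fin n → ℝ) × (Fin r → ℝ) := (x1, x2) with hX
  set s : ℝ := Real.sign (x1 i) with hs
  set c : ℝ := x1 i with hc
  have hsc : s * c = |c| := sign_mul_self' c
  have habs : 0 < |c| := abs_pos.2 hx1
  have hscpos : 0 < s * c := by rw [hsc]; exact habs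
  have hs2 : s * s = 1 := by
    rcases Real.sign_apply_eq_of_ne_zero c hx1 with h | h <;> rw [hs, hc, h] <;> norm_num
  -- CLMs
  set fstL := ContinuousLinearMap.fst ℝ (Fin n → ℝ) (Fin r → ℝ) with hfst
  set sndL := ContinuousLinearMap.snd ℝ (Fin n → ℝ) (Fin r → ℝ) with hsnd
  -- T1
  have hT1 : HasFDerivAt (fun x : (Fin n → ℝ) × (Fin r → ℝ) => pd g x.1 i)
      ((fderiv ℝ (fun y => pd g y i) x1).comp fstL) X := by
    exact (((pd_contDiff hgC i).differentiable one_ne_zero x1).hasFDerivAt).comp X (hasFDerivAt_fst (𝕜 := ℝ) (p := X))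
  -- T2
  have hT2 : ∀ j : Fin r, HasFDerivAt (fun x : (Fin n → ℝ) × (Fin r → ℝ) => x.2 j * pd (R j) x.1 i)
      (x2 j • ((fderiv ℝ (fun y => pd (R j) y i) x1).comp fstL)
        + pd (R j) x1 i • ((ContinuousLinearMap.proj j).comp sndL)) X := by
    intro j
    have hc' : HasFDerivAt (fun x : (Fin n → ℝ) × (Fin r → ℝ) => x.2 j)
        ((ContinuousLinearMap.proj j).comp sndL) X :=
      ((ContinuousLinearMap.proj j).comp sndL).hasFDerivAt
    have hd : HasFDerivAt (fun x : (Fin n → ℝ) × (Fin r → ℝ) => pd (R j) x.1 i)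
        ((fderiv ℝ (fun y => pd (R j) y i) x1).comp fstL) X :=
      by exact (((pd_contDiff (hRC j) i).differentiable one_ne_zero x1).hasFDerivAt).comp X (hasFDerivAt_fst (𝕜 := ℝ) (p := X))
    exact hc'.mul hd
  have hT2s : HasFDerivAt
      (fun x : (Fin n → ℝ) × (Fin r → ℝ) =>
        ∑ j ∈ univ.filter (fun j : Fin r => j ≠ 0), x.2 j * pd (R j) x.1 i)
      (∑ j ∈ univ.filter (fun j : Fin r => j ≠ 0),
        (x2 j • ((fderiv ℝ (fun y => pd (R j) y i) x1).comp fstL)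
          + pd (R j) x1 i • ((ContinuousLinearMap.proj j).comp sndL))) X :=
    HasFDerivAt.fun_sum (fun j _ => hT2 j)
  -- T3
  set Vi : ((Fin n → ℝ) × (Fin r → ℝ)) →L[ℝ] ℝ := s • ((ContinuousLinearMap.proj i).comp fstL)
    with hVi
  set P0 : ((Fin n → ℝ) × (Fin r → ℝ)) →L[ℝ] ℝ := (ContinuousLinearMap.proj 0).comp sndL
    with hP0
  have hq : HasFDerivAt (fun x : (Fin n → ℝ) × (Fin r → ℝ) => (s * x.1 i) ^ (p-1))
      (((p-1) * (s*c) ^ (p-2)) • Vi) X := by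
    have hinner : HasFDerivAt (fun x : (Fin n → ℝ) × (Fin r → ℝ) => s * x.1 i) Vi X := by
      exact Vi.hasFDerivAt
    have houter : HasDerivAt (fun y : ℝ => y ^ (p-1)) ((p-1) * (s*c) ^ (p-1-1)) (s * c) :=
      Real.hasDerivAt_rpow_const (Or.inl hscpos.ne')
    have := houter.comp_hasFDerivAt X hinner
    rw [show p - 1 - 1 = p - 2 by ring] at this
    exact this
  have hc0 : HasFDerivAt (fun x : (Fin n → ℝ) × (Fin r → ℝ) => x.2 0) P0 X := P0.hasFDerivAt
  have hT3' : HasFDerivAt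
      (fun x : (Fin n → ℝ) × (Fin r → ℝ) => (p * s) * (x.2 0 * (s * x.1 i) ^ (p-1)))
      ((p * s) • (x2 0 • (((p-1) * (s*c) ^ (p-2)) • Vi) + (s*c) ^ (p-1) • P0)) X :=
    (hc0.mul hq).const_mul (p * s)
  -- eventual equality of the sign part
  have hcont : ContinuousAt (fun x : (Fin n → ℝ) × (Fin r → ℝ) => s * x.1 i) X :=
    (continuous_const.mul ((continuous_apply i).comp continuous_fst)).continuousAt
  have hopen : ∀ᶠ x : (Fin n → ℝ) × (Fin r → ℝ) in 𝓝 X, 0 < s * x.1 i := by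
    have h0 : (0:ℝ) < s * X.1 i := hscpos
    exact hcont.eventually (eventually_gt_nhds h0)
  have hev : (fun x : (Fin n → ℝ) × (Fin r → ℝ) =>
        p * Real.sign (x.1 i) * x.2 0 * |x.1 i| ^ (p-1))
      =ᶠ[𝓝 X] (fun x => (p * s) * (x.2 0 * (s * x.1 i) ^ (p-1))) := by
    filter_upwards [hopen] with x hx
    have hsgn : Real.sign (x.1 i) = s ∧ |x.1 i| = s * x.1 i := by
      rcases Real.sign_apply_eq_of_ne_zero c hx1 with h | h
      · have hs1 : s = -1 := by rw [hs, hc, h]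
        rw [hs1] at hx ⊢
        have : x.1 i < 0 := by linarith [hx]
        constructor
        · rw [Real.sign_of_neg this]
        · rw [abs_of_neg this]; ring
      · have hs1 : s = 1 := by rw [hs, hc, h]
        rw [hs1] at hx ⊢
        have : 0 < x.1 i := by linarith [hx]
        constructor
        · rw [Real.sign_of_pos this]
        · rw [abs_of_pos this]; ring
    rw [hsgn.1, hsgn.2]
    ring
  -- total derivative
  have hPhiEq : (fun x : (Fin n → ℝ) × (Fin r → ℝ) => PhiC p G i x)
      =ᶠ[𝓝 X] (fun x =>
        (pd g x.1 i + ∑ j ∈ univ.filter (fun j : Fin r => j ≠ 0), x.2 j * pd (R j) x.1 i)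
        + (p * s) * (x.2 0 * (s * x.1 i) ^ (p-1))) := by
    filter_upwards [hev] with x hx
    rw [PhiC, pdG_eq g R G hgC hRC hG x.2 x.1 i, ← hx]
  set D := ((fderiv ℝ (fun y => pd g y i) x1).comp fstL
      + ∑ j ∈ univ.filter (fun j : Fin r => j ≠ 0),
        (x2 j • ((fderiv ℝ (fun y => pd (R j) y i) x1).comp fstL)
          + pd (R j) x1 i • ((ContinuousLinearMap.proj j).comp sndL)))
      + (p * s) • (x2 0 • (((p-1) * (s*c) ^ (p-2)) • Vi) + (s*c) ^ (p-1) • P0) with hD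
  have hPhi : HasFDerivAt (PhiC p G i) D X := by
    apply HasFDerivAt.congr_of_eventuallyEq ((hT1.add hT2s).add hT3') hPhiEq
  have hfD : fderiv ℝ (PhiC p G i) X = D := hPhi.fderiv
  -- now compute the applications
  rw [gradPhiC, hfD]
  simp only [Prod.mk.injEq]
  constructor
  · funext k
    rw [hD]
    simp only [ContinuousLinearMap.add_apply, ContinuousLinearMap.coe_sum', Finset.sum_apply,
      ContinuousLinearMap.coe_comp', Function.comp_apply, hfst, hsnd,
      ContinuousLinearMap.coe_fst', ContinuousLinearMap.coe_snd',
      ContinuousLinearMap.smul_apply, ContinuousLinearMap.proj_apply, hVi, hP0]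
    rw [pd2G_eq g R G hgC hRC hG x2 x1 k i]
    have e1 : fderiv ℝ (fun y => pd g y i) x1 (Pi.single k 1) = pd2 g x1 k i := rfl
    have e2 : ∀ j : Fin r, fderiv ℝ (fun y => pd (R j) y i) x1 (Pi.single k 1)
        = pd2 (R j) x1 k i := fun j => rfl
    rw [e1]
    simp only [e2, Pi.zero_apply, smul_zero, add_zero, smul_eq_mul, mul_zero, zero_mul, zero_add]
    by_cases h : k = i
    · subst h
      rw [if_pos rfl, Pi.single_eq_same, hsc]
      linear_combination (x2 0 * p * (p-1) * |c| ^ (p-2)) * hs2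
    · rw [if_neg h, Pi.single_eq_of_ne (fun hh => h hh.symm)]
      ring
  · funext j
    rw [hD]
    simp only [ContinuousLinearMap.add_apply, ContinuousLinearMap.coe_sum', Finset.sum_apply,
      ContinuousLinearMap.coe_comp', Function.comp_apply, hfst, hsnd,
      ContinuousLinearMap.coe_fst', ContinuousLinearMap.coe_snd',
      ContinuousLinearMap.smul_apply, ContinuousLinearMap.proj_apply, hVi, hP0,
      map_zero, Pi.zero_apply, smul_zero, mul_zero, zero_mul, add_zero, zero_add, smul_eq_mul]
    by_cases hj : j = 0
    · subst hj
      rw [if_pos rfl]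
      have hsum : ∑ x ∈ univ.filter (fun j' : Fin r => j' ≠ 0),
          pd (R x) x1 i * (Pi.single (0 : Fin r) 1 : Fin r → ℝ) x = 0 := by
        apply Finset.sum_eq_zero
        intro x hx
        have hx0 : x ≠ 0 := by simpa using (Finset.mem_filter.1 hx).2
        rw [Pi.single_eq_of_ne hx0, mul_zero]
      rw [hsum, Pi.single_eq_same, hsc]
      ring
    · rw [if_neg hj]
      have hsum : ∑ x ∈ univ.filter (fun j' : Fin r => j' ≠ 0),
          pd (R x) x1 i * (Pi.single j 1 : Fin r → ℝ) x = pd (R j) x1 i := by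
        rw [Finset.sum_eq_single j]
        · rw [Pi.single_eq_same, mul_one]
        · intro x hx hxj
          rw [Pi.single_eq_of_ne hxj, mul_zero]
        · intro hj'
          exact absurd (Finset.mem_filter.2 ⟨Finset.mem_univ j, hj⟩) hj'
      rw [hsum, Pi.single_eq_of_ne (fun hh => hj hh.symm)]
      ring

end gradsec


lemma aux_limits {n r : ℕ} [NeZero r] (U : Ultrafilter ℕ) {p : ℝ} (hp : 0 < p) (hp1 : p ≤ 1)
    (f g : (Fin n → ℝ) → ℝ) (R : Fin r → (Fin n → ℝ) → ℝ)
    (hfC : ContDiff ℝ 1 f) (hgC : ContDiff ℝ 2 g) (hRC : ∀ i, ContDiff ℝ 2 (R i))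
    (G : (Fin n → ℝ) → (Fin r → ℝ) → ℝ)
    (hG : ∀ w lam, G w lam = g w + ∑ i ∈ univ.filter (fun i : Fin r => i ≠ 0), lam i * R i w)
    (w : ℕ → Fin n → ℝ) (lam : ℕ → Fin r → ℝ)
    (zeta : ℕ → Fin n → ℝ) (beta : ℕ → Fin r → ℝ)
    (μ εhat : ℕ → ℝ) (hμpos : ∀ k, 0 < μ k)
    (hKKT : ∀ k, ApproxKKT p f R G (w (k + 1)) (lam (k + 1)) (zeta (k + 1)) (beta (k + 1))
      (μ k) (εhat k))
    (σ : ℕ → ℝ) (hσpos : ∀ k, 0 < σ k)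
    {ws : Fin n → ℝ} {ls : Fin r → ℝ} {zs : Fin n → ℝ} {bs : Fin r → ℝ} {σs : ℝ}
    (hls0 : 0 < ls 0)
    (hW : Tendsto (fun k => w (k+1)) (↑U) (𝓝 ws))
    (hΛ : Tendsto (fun k => lam (k+1)) (↑U) (𝓝 ls))
    (hZ : Tendsto (fun k => σ k • zeta (k+1)) (↑U) (𝓝 zs))
    (hB : Tendsto (fun k => σ k • beta (k+1)) (↑U) (𝓝 bs))
    (hσ : Tendsto σ (↑U) (𝓝 σs))
    (hμT : Tendsto μ (↑U) (𝓝 0))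
    (hεT : Tendsto εhat (↑U) (𝓝 0))
    (hA3' : p = 1 → ∀ i, ws i = 0 → ls 0 ≠ |pd (fun x => G x ls) ws i|) :
    (∀ i, ws i = 0 → zs i = 0) ∧
    ((p * ∑ i ∈ univ.filter (fun i => ws i ≠ 0),
        Real.sign (ws i) * |ws i| ^ (p - 1) * zs i) = bs 0) ∧
    (∀ k : Fin n, ws k ≠ 0 → σs * pd f ws k + (∑ j, pd2 (fun x => G x ls) ws k j * zs j)
        + ls 0 * (p * (p-1) * |ws k| ^ (p-2)) * zs k = 0) ∧
    (∀ j : Fin r, j ≠ 0 → (∑ i, pd (R j) ws i * zs i) = bs j) ∧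
    ((∑ j, ls j * bs j) = 0) ∧ (∀ j, 0 ≤ ls j) ∧ (∀ j, 0 ≤ bs j) := by
  classical
  choose e1 e2 e3 e4 e5 hE1 hE2 hE3 hE4 hLpos hBpos hE5 hNorm using hKKT
  set T : ℕ → ℝ := fun k => (∑ i, (e1 k i) ^ 2) + (e2 k) ^ 2
      + (∑ i ∈ univ.filter (fun i : Fin r => i ≠ 0), (e3 k i) ^ 2)
      + (∑ i, (e4 k i) ^ 2) + (e5 k) ^ 2 with hT
  have hkey : ∀ (k : ℕ) (z : ℝ), z ^ 2 ≤ T k → |z| ≤ εhat k := by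
    intro k z hz
    calc |z| = Real.sqrt (z ^ 2) := (Real.sqrt_sq_eq_abs z).symm
      _ ≤ Real.sqrt (T k) := Real.sqrt_le_sqrt hz
      _ ≤ εhat k := hNorm k
  have hTparts : ∀ k, 0 ≤ (∑ i, (e1 k i) ^ 2) ∧ 0 ≤ (∑ i ∈ univ.filter (fun i : Fin r => i ≠ 0),
      (e3 k i) ^ 2) ∧ 0 ≤ (∑ i, (e4 k i) ^ 2) := by
    intro k
    exact ⟨Finset.sum_nonneg fun _ _ => sq_nonneg _, Finset.sum_nonneg fun _ _ => sq_nonneg _,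
      Finset.sum_nonneg fun _ _ => sq_nonneg _⟩
  have hte1 : ∀ i, Tendsto (fun k => e1 k i) (↑U) (𝓝 0) := by
    intro i
    apply squeeze_zero_norm' (a := εhat) _ hεT
    apply Eventually.of_forall
    intro k
    apply hkey
    have h1 : (e1 k i) ^ 2 ≤ ∑ i', (e1 k i') ^ 2 :=
      Finset.single_le_sum (f := fun i' => (e1 k i') ^ 2) (fun _ _ => sq_nonneg _) (mem_univ i)
    have h2 := hTparts k
    simp only [hT]
    have := sq_nonneg (e2 k); have := sq_nonneg (e5 k)
    linarith [h2.1, h2.2.1, h2.2.2]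
  have hte2 : Tendsto (fun k => e2 k) (↑U) (𝓝 0) := by
    apply squeeze_zero_norm' (a := εhat) _ hεT
    apply Eventually.of_forall
    intro k
    apply hkey
    simp only [hT]
    have h2 := hTparts k
    have := sq_nonneg (e5 k)
    linarith [h2.1, h2.2.1, h2.2.2]
  have hte3 : ∀ j : Fin r, j ≠ 0 → Tendsto (fun k => e3 k j) (↑U) (𝓝 0) := by
    intro j hj
    apply squeeze_zero_norm' (a := εhat) _ hεT
    apply Eventually.of_forall
    intro k
    apply hkey
    have h1 : (e3 k j) ^ 2 ≤ ∑ i ∈ univ.filter (fun i : Fin r => i ≠ 0), (e3 k i) ^ 2 :=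
      Finset.single_le_sum (f := fun i' => (e3 k i') ^ 2) (fun _ _ => sq_nonneg _)
        (Finset.mem_filter.2 ⟨mem_univ j, hj⟩)
    have h2 := hTparts k
    simp only [hT]
    have := sq_nonneg (e2 k); have := sq_nonneg (e5 k)
    linarith [h2.1, h2.2.2]
  have hte4 : ∀ i, Tendsto (fun k => e4 k i) (↑U) (𝓝 0) := by
    intro i
    apply squeeze_zero_norm' (a := εhat) _ hεT
    apply Eventually.of_forall
    intro k
    apply hkey
    have h1 : (e4 k i) ^ 2 ≤ ∑ i', (e4 k i') ^ 2 :=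
      Finset.single_le_sum (f := fun i' => (e4 k i') ^ 2) (fun _ _ => sq_nonneg _) (mem_univ i)
    have h2 := hTparts k
    simp only [hT]
    have := sq_nonneg (e2 k); have := sq_nonneg (e5 k)
    linarith [h2.1, h2.2.1]
  have hte5 : Tendsto (fun k => e5 k) (↑U) (𝓝 0) := by
    apply squeeze_zero_norm' (a := εhat) _ hεT
    apply Eventually.of_forall
    intro k
    apply hkey
    simp only [hT]
    have h2 := hTparts k
    have := sq_nonneg (e2 k)
    linarith [h2.1, h2.2.1, h2.2.2]
  -- componentwise limits
  have hWpi : ∀ i, Tendsto (fun k => w (k+1) i) (↑U) (𝓝 (ws i)) := fun i =>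
    tendsto_pi_nhds.1 hW i
  have hΛpi : ∀ j, Tendsto (fun k => lam (k+1) j) (↑U) (𝓝 (ls j)) := fun j =>
    tendsto_pi_nhds.1 hΛ j
  have hZpi : ∀ i, Tendsto (fun k => σ k * zeta (k+1) i) (↑U) (𝓝 (zs i)) := by
    intro i
    have := tendsto_pi_nhds.1 hZ i
    simpa [Pi.smul_apply, smul_eq_mul] using this
  have hBpi : ∀ j, Tendsto (fun k => σ k * beta (k+1) j) (↑U) (𝓝 (bs j)) := by
    intro j
    have := tendsto_pi_nhds.1 hB j
    simpa [Pi.smul_apply, smul_eq_mul] using this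
  have hl0 := hΛpi 0
  -- λ1 * dphi limits from e4
  have hadphi : ∀ i, Tendsto (fun k => lam (k+1) 0 * dphi p (μ k) (w (k+1) i)) (↑U)
      (𝓝 (- pd (fun x => G x ls) ws i)) := by
    intro i
    have h1 : Tendsto (fun k => e4 k i - pd (fun x => G x (lam (k+1))) (w (k+1)) i) (↑U)
        (𝓝 (0 - pd (fun x => G x ls) ws i)) :=
      (hte4 i).sub (tend_pdG g R G hgC hRC hG hW hΛ i)
    rw [zero_sub] at h1
    apply h1.congr
    intro k
    have := hE4 k i
    linarith
  -- blow-up of second derivatives at vanishing coordinates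
  have hblow : ∀ i, ws i = 0 →
      Tendsto (fun k => |lam (k+1) 0 * d2phi p (μ k) (w (k+1) i)|) (↑U) atTop := by
    intro i hwsi
    have hx0 : Tendsto (fun k => w (k+1) i) (↑U) (𝓝 0) := hwsi ▸ hWpi i
    have hcore := core_blowup U hp hp1 (x := fun k => w (k+1) i) (μ := μ)
      (lam1 := fun k => lam (k+1) 0) hμpos hx0 hμT hl0 hls0 (hadphi i)
      (fun hpeq => by
        have := hA3' hpeq i hwsi
        rwa [← abs_neg] at this)
    have habs : Tendsto (fun k => |lam (k+1) 0|) (↑U) (𝓝 (|ls 0|)) := hl0.abs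
    have hpos : 0 < |ls 0| := abs_pos.2 hls0.ne'
    have := Tendsto.pos_mul_atTop hpos habs hcore
    apply this.congr
    intro k
    rw [← abs_mul]
  -- scaled row identity from e1
  have hrowid : ∀ k i, lam (k+1) 0 * d2phi p (μ k) (w (k+1) i) * (σ k * zeta (k+1) i)
      = σ k * e1 k i - σ k * pd f (w (k+1)) i
        - ∑ j, pd2 (fun x => G x (lam (k+1))) (w (k+1)) i j * (σ k * zeta (k+1) j) := by
    intro k i
    have h0 := hE1 k i
    have hsum : ∑ j, pd2 (fun x => G x (lam (k+1))) (w (k+1)) i j * (σ k * zeta (k+1) j)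
        = σ k * ∑ j, pd2 (fun x => G x (lam (k+1))) (w (k+1)) i j * zeta (k+1) j := by
      rw [Finset.mul_sum]
      apply Finset.sum_congr rfl
      intro j _
      ring
    rw [hsum]
    linear_combination (σ k) * h0
  have hrowlim : ∀ i, Tendsto
      (fun k => lam (k+1) 0 * d2phi p (μ k) (w (k+1) i) * (σ k * zeta (k+1) i)) (↑U)
      (𝓝 (σs * 0 - σs * pd f ws i - ∑ j, pd2 (fun x => G x ls) ws i j * zs j)) := by
    intro i
    have h1 : Tendsto (fun k => σ k * e1 k i) (↑U) (𝓝 (σs * 0)) := hσ.mul (hte1 i)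
    have h2 : Tendsto (fun k => σ k * pd f (w (k+1)) i) (↑U) (𝓝 (σs * pd f ws i)) :=
      hσ.mul (((pd_cont hfC i).tendsto ws).comp hW)
    have h3 : Tendsto (fun k => ∑ j, pd2 (fun x => G x (lam (k+1))) (w (k+1)) i j
        * (σ k * zeta (k+1) j)) (↑U) (𝓝 (∑ j, pd2 (fun x => G x ls) ws i j * zs j)) :=
      tendsto_finset_sum _ (fun j _ => (tend_pd2G g R G hgC hRC hG hW hΛ i j).mul (hZpi j))
    exact ((h1.sub h2).sub h3).congr (fun k => (hrowid k i).symm)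
  -- C1
  have hzi : ∀ i, ws i = 0 → Tendsto (fun k => σ k * zeta (k+1) i) (↑U) (𝓝 0) := by
    intro i hwsi
    have hev : ∀ᶠ k in (↑U : Filter ℕ), (1:ℝ) ≤ |lam (k+1) 0 * d2phi p (μ k) (w (k+1) i)| :=
      (hblow i hwsi).eventually_ge_atTop 1
    apply squeeze_zero_norm'
      (a := fun k => |lam (k+1) 0 * d2phi p (μ k) (w (k+1) i) * (σ k * zeta (k+1) i)|
        / |lam (k+1) 0 * d2phi p (μ k) (w (k+1) i)|)
    · filter_upwards [hev] with k hk
      have hne : |lam (k+1) 0 * d2phi p (μ k) (w (k+1) i)| ≠ 0 := by linarith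
      have habsdiv : ∀ (A B : ℝ), |A| ≠ 0 → |A * B| / |A| = |B| := by
        intro A B hA
        rw [abs_mul, mul_comm, mul_div_assoc, div_self hA, mul_one]
      rw [Real.norm_eq_abs, habsdiv _ _ hne]
    · exact Tendsto.div_atTop (hrowlim i).abs (hblow i hwsi)
  have hC1 : ∀ i, ws i = 0 → zs i = 0 := fun i hwsi =>
    tendsto_nhds_unique (hZpi i) (hzi i hwsi)
  -- C3
  have hC3 : ∀ k : Fin n, ws k ≠ 0 → σs * pd f ws k
      + (∑ j, pd2 (fun x => G x ls) ws k j * zs j)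
      + ls 0 * (p * (p-1) * |ws k| ^ (p-2)) * zs k = 0 := by
    intro i hwsi
    have hd2 : Tendsto (fun k => lam (k+1) 0 * d2phi p (μ k) (w (k+1) i) * (σ k * zeta (k+1) i))
        (↑U) (𝓝 (ls 0 * (p * (p-1) * |ws i| ^ (p-2)) * zs i)) :=
      (hl0.mul (tend_d2phi p hwsi hμT (hWpi i))).mul (hZpi i)
    have := tendsto_nhds_unique hd2 (hrowlim i)
    linarith [this]
  -- C2
  have hC2 : (p * ∑ i ∈ univ.filter (fun i => ws i ≠ 0),
      Real.sign (ws i) * |ws i| ^ (p - 1) * zs i) = bs 0 := by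
    have hid : ∀ k, (∑ i, dphi p (μ k) (w (k+1) i) * (σ k * zeta (k+1) i))
        = σ k * beta (k+1) 0 + σ k * e2 k := by
      intro k
      have h0 := hE2 k
      have hsum : ∑ i, dphi p (μ k) (w (k+1) i) * (σ k * zeta (k+1) i)
          = σ k * ∑ i, dphi p (μ k) (w (k+1) i) * zeta (k+1) i := by
        rw [Finset.mul_sum]
        apply Finset.sum_congr rfl
        intro j _
        ring
      rw [hsum]
      linear_combination (σ k) * h0
    have hsplit : ∀ k, (∑ i, dphi p (μ k) (w (k+1) i) * (σ k * zeta (k+1) i))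
        = (∑ i ∈ univ.filter (fun i => ws i ≠ 0), dphi p (μ k) (w (k+1) i) * (σ k * zeta (k+1) i))
          + (∑ i ∈ univ.filter (fun i => ¬ ws i ≠ 0),
              dphi p (μ k) (w (k+1) i) * (σ k * zeta (k+1) i)) := fun k =>
      (Finset.sum_filter_add_sum_filter_not univ _ _).symm
    have hlim1 : Tendsto (fun k => ∑ i ∈ univ.filter (fun i => ws i ≠ 0),
        dphi p (μ k) (w (k+1) i) * (σ k * zeta (k+1) i)) (↑U)
        (𝓝 (∑ i ∈ univ.filter (fun i => ws i ≠ 0),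
          (p * Real.sign (ws i) * |ws i| ^ (p-1)) * zs i)) := by
      apply tendsto_finset_sum
      intro i hi
      have hwsi : ws i ≠ 0 := (Finset.mem_filter.1 hi).2
      exact (tend_dphi p hwsi hμT (hWpi i)).mul (hZpi i)
    have hlim2 : Tendsto (fun k => ∑ i ∈ univ.filter (fun i => ¬ ws i ≠ 0),
        dphi p (μ k) (w (k+1) i) * (σ k * zeta (k+1) i)) (↑U)
        (𝓝 (∑ i ∈ univ.filter (fun i => ¬ ws i ≠ 0), (0:ℝ))) := by
      apply tendsto_finset_sum
      intro i hi
      have hwsi : ws i = 0 := not_not.1 (Finset.mem_filter.1 hi).2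
      have hevpos : ∀ᶠ k in (↑U : Filter ℕ), 0 < lam (k+1) 0 :=
        hl0.eventually (eventually_gt_nhds hls0)
      have h1 : Tendsto (fun k => (lam (k+1) 0 * dphi p (μ k) (w (k+1) i))
          * (σ k * zeta (k+1) i) * (lam (k+1) 0)⁻¹) (↑U)
          (𝓝 ((- pd (fun x => G x ls) ws i) * 0 * (ls 0)⁻¹)) :=
        ((hadphi i).mul (hzi i hwsi)).mul (hl0.inv₀ hls0.ne')
      have h2 : (fun k => (lam (k+1) 0 * dphi p (μ k) (w (k+1) i))
          * (σ k * zeta (k+1) i) * (lam (k+1) 0)⁻¹)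
          =ᶠ[(↑U : Filter ℕ)] (fun k => dphi p (μ k) (w (k+1) i) * (σ k * zeta (k+1) i)) := by
        filter_upwards [hevpos] with k hk
        field_simp
      have := h1.congr' h2
      simpa using this
    have hsum_tend : Tendsto (fun k => ∑ i, dphi p (μ k) (w (k+1) i) * (σ k * zeta (k+1) i)) (↑U)
        (𝓝 ((∑ i ∈ univ.filter (fun i => ws i ≠ 0),
          (p * Real.sign (ws i) * |ws i| ^ (p-1)) * zs i) + ∑ i ∈ univ.filter (fun i => ¬ ws i ≠ 0), (0:ℝ))) := by
      have := hlim1.add hlim2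
      apply this.congr
      intro k
      exact (hsplit k).symm
    have hrhs_tend : Tendsto (fun k => σ k * beta (k+1) 0 + σ k * e2 k) (↑U)
        (𝓝 (bs 0 + σs * 0)) := (hBpi 0).add (hσ.mul hte2)
    have := tendsto_nhds_unique (hsum_tend.congr (fun k => hid k)) hrhs_tend
    rw [Finset.sum_const, smul_zero, add_zero, mul_zero, add_zero] at this
    rw [← this, Finset.mul_sum]
    apply Finset.sum_congr rfl
    intro i _
    ring
  -- C4
  have hC4 : ∀ j : Fin r, j ≠ 0 → (∑ i, pd (R j) ws i * zs i) = bs j := by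
    intro j hj
    have hid : ∀ k, (∑ i, pd (R j) (w (k+1)) i * (σ k * zeta (k+1) i))
        = σ k * beta (k+1) j + σ k * e3 k j := by
      intro k
      have h0 := hE3 k j hj
      have hsum : ∑ i, pd (R j) (w (k+1)) i * (σ k * zeta (k+1) i)
          = σ k * ∑ i, pd (R j) (w (k+1)) i * zeta (k+1) i := by
        rw [Finset.mul_sum]
        apply Finset.sum_congr rfl
        intro i _
        ring
      rw [hsum]
      linear_combination (σ k) * h0
    have hlhs : Tendsto (fun k => ∑ i, pd (R j) (w (k+1)) i * (σ k * zeta (k+1) i)) (↑U)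
        (𝓝 (∑ i, pd (R j) ws i * zs i)) := by
      apply tendsto_finset_sum
      intro i _
      exact ((((pd_cont ((hRC j).of_le (by norm_num)) i).tendsto ws).comp hW)).mul (hZpi i)
    have hrhs : Tendsto (fun k => σ k * beta (k+1) j + σ k * e3 k j) (↑U)
        (𝓝 (bs j + σs * 0)) := (hBpi j).add (hσ.mul (hte3 j hj))
    have := tendsto_nhds_unique (hlhs.congr (fun k => hid k)) hrhs
    rw [mul_zero, add_zero] at this
    exact this
  -- C5
  have hC5 : (∑ j, ls j * bs j) = 0 := by
    have hid : ∀ k, (∑ j, lam (k+1) j * (σ k * beta (k+1) j)) = σ k * e5 k := by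
      intro k
      have h0 := hE5 k
      have hsum : ∑ j, lam (k+1) j * (σ k * beta (k+1) j)
          = σ k * ∑ j, lam (k+1) j * beta (k+1) j := by
        rw [Finset.mul_sum]
        apply Finset.sum_congr rfl
        intro j _
        ring
      rw [hsum, h0]
    have hlhs : Tendsto (fun k => ∑ j, lam (k+1) j * (σ k * beta (k+1) j)) (↑U)
        (𝓝 (∑ j, ls j * bs j)) :=
      tendsto_finset_sum _ (fun j _ => (hΛpi j).mul (hBpi j))
    have hrhs : Tendsto (fun k => σ k * e5 k) (↑U) (𝓝 (σs * 0)) := hσ.mul hte5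
    have := tendsto_nhds_unique (hlhs.congr (fun k => hid k)) hrhs
    rw [mul_zero] at this
    exact this
  -- C6
  have hC6a : ∀ j, 0 ≤ ls j := fun j => ge_of_tendsto' (hΛpi j) (fun k => hLpos k j)
  have hC6b : ∀ j, 0 ≤ bs j := fun j => ge_of_tendsto' (hBpi j)
    (fun k => mul_nonneg (hσpos k).le (hBpos k j))
  exact ⟨hC1, hC2, hC3, hC4, hC5, hC6a, hC6b⟩

/-- Proposition 4: under Assumptions A1–A4, the sequence
`{(wᵏ, λᵏ, ζᵏ, βᵏ)}` has at least one accumulation point, and every accumulation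
point `(w*, λ*, ζ*, β*)` satisfies `ζᵢ* = 0` for all `i ∈ I(w*)` and
`p Σ_{i∉I(w*)} sgn(wᵢ*) |wᵢ*|^{p−1} ζᵢ* = β₁*`. -/
theorem accumulation_point_conditions {n r : ℕ} [NeZero r] (p : ℝ)
    (hp : 0 < p) (hp1 : p ≤ 1)
    (f g : (Fin n → ℝ) → ℝ) (R : Fin r → (Fin n → ℝ) → ℝ)
    (hfC : ContDiff ℝ 1 f) (hgC : ContDiff ℝ 2 g) (hRC : ∀ i, ContDiff ℝ 2 (R i))
    (G : (Fin n → ℝ) → (Fin r → ℝ) → ℝ)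
    (hG : ∀ w lam, G w lam = g w + ∑ i ∈ univ.filter (fun i : Fin r => i ≠ 0), lam i * R i w)
    (w : ℕ → Fin n → ℝ) (lam : ℕ → Fin r → ℝ)
    (zeta : ℕ → Fin n → ℝ) (beta : ℕ → Fin r → ℝ)
    (μ εhat : ℕ → ℝ)
    (hμpos : ∀ k, 0 < μ k) (hμ : Tendsto μ atTop (nhds 0))
    (hεnonneg : ∀ k, 0 ≤ εhat k) (hε : Tendsto εhat atTop (nhds 0))
    (hKKT : ∀ k, ApproxKKT p f R G (w (k + 1)) (lam (k + 1)) (zeta (k + 1)) (beta (k + 1))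
      (μ k) (εhat k))
    (hA1 : 0 < Filter.liminf (fun k => lam k 0) atTop)
    (hA2 : ∃ C : ℝ, ∀ k, (∀ i, |w k i| ≤ C) ∧ (∀ i, |lam k i| ≤ C))
    (hA3 : p = 1 → ∀ (wstar : Fin n → ℝ) (lamstar : Fin r → ℝ),
      MapClusterPt (wstar, lamstar) atTop (fun k => (w k, lam k)) →
      ∀ i, wstar i = 0 → lamstar 0 ≠ |pd (fun x => G x lamstar) wstar i|)
    (hA4 : ∀ (wstar : Fin n → ℝ) (lamstar : Fin r → ℝ),
      MapClusterPt (wstar, lamstar) atTop (fun k => (w k, lam k)) →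
      LICQ p G wstar lamstar) :
    (∃ q : (Fin n → ℝ) × (Fin r → ℝ) × (Fin n → ℝ) × (Fin r → ℝ),
      MapClusterPt q atTop (fun k => (w k, lam k, zeta k, beta k))) ∧
    (∀ (wstar : Fin n → ℝ) (lamstar : Fin r → ℝ)
        (zetastar : Fin n → ℝ) (betastar : Fin r → ℝ),
      MapClusterPt (wstar, lamstar, zetastar, betastar) atTop
        (fun k => (w k, lam k, zeta k, beta k)) →
      (∀ i, wstar i = 0 → zetastar i = 0) ∧
      ((p * ∑ i ∈ univ.filter (fun i => wstar i ≠ 0),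
          Real.sign (wstar i) * |wstar i| ^ (p - 1) * zetastar i) = betastar 0)) := by
  classical
  obtain ⟨C, hC⟩ := hA2
  -- A1: eventual lower bound on lam k 0
  have hbdd : Filter.IsBoundedUnder (· ≥ ·) atTop (fun k => lam k 0) :=
    ⟨-C, Filter.eventually_map.2 (Eventually.of_forall fun k => (abs_le.1 ((hC k).2 0)).1)⟩
  set L := Filter.liminf (fun k => lam k 0) atTop with hL
  have hev0 : ∀ᶠ k in atTop, L / 2 < lam k 0 :=
    eventually_lt_of_lt_liminf (by linarith) hbdd
  have hev1 : ∀ᶠ k in atTop, L / 2 < lam (k+1) 0 := by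
    obtain ⟨N, hN⟩ := eventually_atTop.1 hev0
    exact eventually_atTop.2 ⟨N, fun k hk => hN (k+1) (le_trans hk (Nat.le_succ k))⟩
  have hL2 : 0 < L / 2 := by linarith
  -- shift map facts
  have hshift : Tendsto (fun k : ℕ => k + 1) atTop atTop := tendsto_add_atTop_nat 1
  constructor
  · -- existence of an accumulation point
    obtain ⟨U, hUat⟩ := Filter.exists_ultrafilter_le (atTop : Filter ℕ)
    have hexw : ∀ i, ∃ li, Tendsto (fun k => w (k+1) i) (↑U) (𝓝 li) := by
      intro i
      obtain ⟨l, _, hl⟩ := ult_lim U (f := fun k => w (k+1) i) (b := C)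
        (Eventually.of_forall fun k => (hC (k+1)).1 i)
      exact ⟨l, hl⟩
    choose ws hws using hexw
    have hW : Tendsto (fun k => w (k+1)) (↑U) (𝓝 ws) := tendsto_pi_nhds.2 hws
    have hexl : ∀ j, ∃ lj, Tendsto (fun k => lam (k+1) j) (↑U) (𝓝 lj) := by
      intro j
      obtain ⟨l, _, hl⟩ := ult_lim U (f := fun k => lam (k+1) j) (b := C)
        (Eventually.of_forall fun k => (hC (k+1)).2 j)
      exact ⟨l, hl⟩
    choose ls hls using hexl
    have hΛ : Tendsto (fun k => lam (k+1)) (↑U) (𝓝 ls) := tendsto_pi_nhds.2 hls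
    have hWL : Tendsto (fun k => (w (k+1), lam (k+1))) (↑U) (𝓝 (ws, ls)) :=
      hW.prodMk_nhds hΛ
    have hclus : MapClusterPt (ws, ls) atTop (fun k => (w k, lam k)) :=
      MapClusterPt.of_comp (hshift.mono_left hUat) hWL.mapClusterPt
    have hls0 : 0 < ls 0 := by
      have hevU : ∀ᶠ k in (↑U : Filter ℕ), L / 2 ≤ lam (k+1) 0 :=
        (hev1.filter_mono hUat).mono (fun k hk => hk.le)
      have := ge_of_tendsto (hls 0) hevU
      linarith
    have hA3' : p = 1 → ∀ i, ws i = 0 → ls 0 ≠ |pd (fun x => G x ls) ws i| :=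
      fun hpeq i hwsi => hA3 hpeq ws ls hclus i hwsi
    set N : ℕ → ℝ := fun k => 1 + (∑ i, |zeta (k+1) i|) + (∑ j, |beta (k+1) j|) with hN
    have hN1 : ∀ k, 1 ≤ N k := by
      intro k
      have h1 : 0 ≤ ∑ i, |zeta (k+1) i| := Finset.sum_nonneg fun _ _ => abs_nonneg _
      have h2 : 0 ≤ ∑ j, |beta (k+1) j| := Finset.sum_nonneg fun _ _ => abs_nonneg _
      simp only [hN]
      linarith
    have hNpos : ∀ k, 0 < N k := fun k => lt_of_lt_of_le one_pos (hN1 k)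
    rcases ult_dichotomy U N (fun k => (hNpos k).le) with hNtop | ⟨b, hNb⟩
    · -- unbounded case: contradiction via LICQ
      exfalso
      set σ : ℕ → ℝ := fun k => (N k)⁻¹ with hσdef
      have hσpos : ∀ k, 0 < σ k := fun k => inv_pos.2 (hNpos k)
      have hσ0 : Tendsto σ (↑U) (𝓝 0) := hNtop.inv_tendsto_atTop
      have hzb : ∀ i k, |σ k * zeta (k+1) i| ≤ 1 := by
        intro i k
        rw [abs_mul, abs_of_pos (hσpos k)]
        have h1 : |zeta (k+1) i| ≤ N k := by
          have h3 := Finset.single_le_sum (f := fun i' => |zeta (k+1) i'|)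
            (fun _ _ => abs_nonneg _) (mem_univ i)
          have h2 : 0 ≤ ∑ j, |beta (k+1) j| := Finset.sum_nonneg fun _ _ => abs_nonneg _
          have h4 : N k = 1 + (∑ i', |zeta (k+1) i'|) + (∑ j, |beta (k+1) j|) := by
            simp only [hN]
          linarith
        calc σ k * |zeta (k+1) i| ≤ σ k * N k := mul_le_mul_of_nonneg_left h1 (hσpos k).le
          _ = 1 := inv_mul_cancel₀ (hNpos k).ne'
      have hbb : ∀ j k, |σ k * beta (k+1) j| ≤ 1 := by
        intro j k
        rw [abs_mul, abs_of_pos (hσpos k)]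
        have h1 : |beta (k+1) j| ≤ N k := by
          have h3 := Finset.single_le_sum (f := fun j' => |beta (k+1) j'|)
            (fun _ _ => abs_nonneg _) (mem_univ j)
          have h2 : 0 ≤ ∑ i, |zeta (k+1) i| := Finset.sum_nonneg fun _ _ => abs_nonneg _
          have h4 : N k = 1 + (∑ i, |zeta (k+1) i|) + (∑ j', |beta (k+1) j'|) := by
            simp only [hN]
          linarith
        calc σ k * |beta (k+1) j| ≤ σ k * N k := mul_le_mul_of_nonneg_left h1 (hσpos k).le
          _ = 1 := inv_mul_cancel₀ (hNpos k).ne'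
      have hexz : ∀ i, ∃ li, Tendsto (fun k => σ k * zeta (k+1) i) (↑U) (𝓝 li) := by
        intro i
        obtain ⟨l, _, hl⟩ := ult_lim U (f := fun k => σ k * zeta (k+1) i) (b := 1)
          (Eventually.of_forall fun k => hzb i k)
        exact ⟨l, hl⟩
      choose zs hzs using hexz
      have hexb : ∀ j, ∃ lj, Tendsto (fun k => σ k * beta (k+1) j) (↑U) (𝓝 lj) := by
        intro j
        obtain ⟨l, _, hl⟩ := ult_lim U (f := fun k => σ k * beta (k+1) j) (b := 1)
          (Eventually.of_forall fun k => hbb j k)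
        exact ⟨l, hl⟩
      choose bs hbs using hexb
      have hZ : Tendsto (fun k => σ k • zeta (k+1)) (↑U) (𝓝 zs) := by
        apply tendsto_pi_nhds.2
        intro i
        simpa [Pi.smul_apply, smul_eq_mul] using hzs i
      have hB : Tendsto (fun k => σ k • beta (k+1)) (↑U) (𝓝 bs) := by
        apply tendsto_pi_nhds.2
        intro j
        simpa [Pi.smul_apply, smul_eq_mul] using hbs j
      obtain ⟨hC1, hC2, hC3, hC4, hC5, hC6a, hC6b⟩ := aux_limits U hp hp1 f g R hfC hgC hRC G hG
        w lam zeta beta μ εhat hμpos hKKT σ hσpos hls0 hW hΛ hZ hB hσ0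
        (hμ.mono_left hUat) (hε.mono_left hUat) hA3'
      -- norm-one identity in the limit
      have hsumid : ∀ k, (∑ i, |σ k * zeta (k+1) i|) + (∑ j, |σ k * beta (k+1) j|)
          = 1 - σ k := by
        intro k
        have h1 : ∀ v : ℝ, |σ k * v| = σ k * |v| := fun v => by
          rw [abs_mul, abs_of_pos (hσpos k)]
        simp only [h1]
        rw [← Finset.mul_sum, ← Finset.mul_sum, ← mul_add]
        have h2 : (∑ i, |zeta (k+1) i|) + (∑ j, |beta (k+1) j|) = N k - 1 := by
          simp only [hN]; ring
        rw [h2, mul_sub, mul_one, hσdef]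
        rw [inv_mul_cancel₀ (hNpos k).ne']
      have hone : (∑ i, |zs i|) + (∑ j, |bs j|) = 1 := by
        have hl : Tendsto (fun k => (∑ i, |σ k * zeta (k+1) i|) + (∑ j, |σ k * beta (k+1) j|))
            (↑U) (𝓝 ((∑ i, |zs i|) + (∑ j, |bs j|))) :=
          (tendsto_finset_sum _ fun i _ => (hzs i).abs).add
            (tendsto_finset_sum _ fun j _ => (hbs j).abs)
        have hr : Tendsto (fun k => 1 - σ k) (↑U) (𝓝 (1 - 0)) :=
          tendsto_const_nhds.sub hσ0
        have := tendsto_nhds_unique (hr.congr (fun k => (hsumid k).symm)) hl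
        linarith [this]
      -- zero products
      have htermz : ∀ j, ls j * bs j = 0 := fun j =>
        (Finset.sum_eq_zero_iff_of_nonneg
          (fun j' _ => mul_nonneg (hC6a j') (hC6b j'))).1 hC5 j (mem_univ j)
      have hbs0 : bs 0 = 0 := (mul_eq_zero.1 (htermz 0)).resolve_left hls0.ne'
      have hbsnz : ∀ j, ls j ≠ 0 → bs j = 0 := fun j hj =>
        (mul_eq_zero.1 (htermz j)).resolve_left hj
      -- the linear combination
      have hLI : LinearIndependent ℝ
          (Sum.elim (fun i : {i : Fin n // ws i ≠ 0} => gradPhiC p G i.1 (ws, ls))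
            (Sum.elim
              (fun i : {i : Fin n // ws i = 0} =>
                ((Pi.single i.1 1, 0) : (Fin n → ℝ) × (Fin r → ℝ)))
              (fun j : {j : Fin r // ls j = 0} =>
                ((0, Pi.single j.1 1) : (Fin n → ℝ) × (Fin r → ℝ))))) := hA4 ws ls hclus
      set A : Fin n → ℝ := fun k => ∑ j', pd2 (fun x => G x ls) ws k j' * zs j' with hA
      set co : ({i : Fin n // ws i ≠ 0} ⊕ ({i : Fin n // ws i = 0} ⊕ {j : Fin r // ls j = 0})) → ℝ :=
        Sum.elim (fun i => zs i.1) (Sum.elim (fun i => - A i.1) (fun j => - bs j.1)) with hco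
      -- extension identity for A
      have hAk : ∀ k : Fin n,
          (∑ i ∈ univ.filter (fun i => ws i ≠ 0), zs i * pd2 (fun x => G x ls) ws k i)
          = A k := by
        intro k
        simp only [hA]
        rw [← Finset.sum_filter_add_sum_filter_not univ (fun i => ws i ≠ 0)
          (fun j' => pd2 (fun x => G x ls) ws k j' * zs j')]
        have h2 : (∑ i ∈ univ.filter (fun i => ¬ ws i ≠ 0),
            pd2 (fun x => G x ls) ws k i * zs i) = 0 := by
          apply Finset.sum_eq_zero
          intro i hi
          rw [hC1 i (not_not.1 (Finset.mem_filter.1 hi).2), mul_zero]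
        rw [h2, add_zero]
        apply Finset.sum_congr rfl
        intro i _
        ring
      have hmemne : ∀ x : Fin n, x ∈ univ.filter (fun i => ws i ≠ 0) ↔ ws x ≠ 0 := by
        intro x; simp
      have hmemeq : ∀ x : Fin n, x ∈ univ.filter (fun i => ws i = 0) ↔ ws x = 0 := by
        intro x; simp
      have hmemls : ∀ x : Fin r, x ∈ univ.filter (fun j => ls j = 0) ↔ ls x = 0 := by
        intro x; simp
      have hgrad : ∀ i : {i : Fin n // ws i ≠ 0}, gradPhiC p G i.1 (ws, ls)
          = (fun k => pd2 (fun x => G x ls) ws k i.1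
                + (if k = i.1 then ls 0 * (p * (p-1) * |ws i.1| ^ (p-2)) else 0),
             fun j => if j = 0 then p * Real.sign (ws i.1) * |ws i.1| ^ (p-1)
                else pd (R j) ws i.1) :=
        fun i => gradPhiC_eq g R G hgC hRC hG hp i.1 ws ls i.2
      have hRk : ∀ j : Fin r, (∑ i ∈ univ.filter (fun i => ws i ≠ 0), zs i * pd (R j) ws i)
          = ∑ i, pd (R j) ws i * zs i := by
        intro j
        rw [← Finset.sum_filter_add_sum_filter_not univ (fun i => ws i ≠ 0)
          (fun i => pd (R j) ws i * zs i)]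
        have h2 : (∑ i ∈ univ.filter (fun i => ¬ ws i ≠ 0), pd (R j) ws i * zs i) = 0 := by
          apply Finset.sum_eq_zero
          intro i hi
          rw [hC1 i (not_not.1 (Finset.mem_filter.1 hi).2), mul_zero]
        rw [h2, add_zero]
        apply Finset.sum_congr rfl
        intro i _
        ring
      have hcomb : (∑ idx, co idx •
          (Sum.elim (fun i : {i : Fin n // ws i ≠ 0} => gradPhiC p G i.1 (ws, ls))
            (Sum.elim
              (fun i : {i : Fin n // ws i = 0} =>
                ((Pi.single i.1 1, 0) : (Fin n → ℝ) × (Fin r → ℝ)))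
              (fun j : {j : Fin r // ls j = 0} =>
                ((0, Pi.single j.1 1) : (Fin n → ℝ) × (Fin r → ℝ))))) idx) = 0 := by
        apply Prod.ext
        · -- first component
          rw [Prod.fst_sum]
          funext k
          rw [Finset.sum_apply]
          simp only [Fintype.sum_sum_type, hco, Sum.elim_inl, Sum.elim_inr, hgrad,
            Prod.smul_fst, Pi.smul_apply, smul_eq_mul, Pi.zero_apply, mul_zero,
            Finset.sum_const_zero, add_zero, Prod.fst_zero]
          rw [← Finset.sum_subtype (univ.filter (fun i => ws i ≠ 0)) hmemne
            (fun i => zs i * (pd2 (fun x => G x ls) ws k i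
              + (if k = i then ls 0 * (p * (p-1) * |ws i| ^ (p-2)) else 0)))]
          rw [← Finset.sum_subtype (univ.filter (fun i => ws i = 0)) hmemeq
            (fun i => -A i * (Pi.single i 1 : Fin n → ℝ) k)]
          have hsplit : (∑ i ∈ univ.filter (fun i => ws i ≠ 0),
              zs i * (pd2 (fun x => G x ls) ws k i
                + (if k = i then ls 0 * (p * (p-1) * |ws i| ^ (p-2)) else 0)))
              = A k + (if k ∈ univ.filter (fun i => ws i ≠ 0)
                  then zs k * (ls 0 * (p * (p-1) * |ws k| ^ (p-2))) else 0) := by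
            simp only [mul_add]
            rw [Finset.sum_add_distrib, hAk k]
            congr 1
            have hterm : ∀ i, zs i * (if k = i then ls 0 * (p * (p-1) * |ws i| ^ (p-2)) else 0)
                = if k = i then zs i * (ls 0 * (p * (p-1) * |ws i| ^ (p-2))) else 0 := by
              intro i
              rw [mul_ite, mul_zero]
            simp only [hterm]
            rw [Finset.sum_ite_eq]
          have hsingle : (∑ i ∈ univ.filter (fun i => ws i = 0), -A i * (Pi.single i 1 : Fin n → ℝ) k)
              = if k ∈ univ.filter (fun i => ws i = 0) then -A k else 0 := by
            have hterm : ∀ i : Fin n, -A i * (Pi.single i 1 : Fin n → ℝ) k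
                = if k = i then -A i else 0 := by
              intro i
              rw [Pi.single_apply]
              by_cases h : k = i
              · simp [h]
              · simp [h]
            simp only [hterm]
            rw [Finset.sum_ite_eq]
          rw [hsplit, hsingle]
          by_cases hk : ws k = 0
          · rw [if_neg (by simp [hk]), if_pos (by simp [hk])]
            ring
          · rw [if_pos (by simp [hk]), if_neg (by simp [hk])]
            have h3 := hC3 k hk
            simp only [hA]
            linear_combination h3
        · -- second component
          rw [Prod.snd_sum]
          funext j
          rw [Finset.sum_apply]
          simp only [Fintype.sum_sum_type, hco, Sum.elim_inl, Sum.elim_inr, hgrad,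
            Prod.smul_snd, Pi.smul_apply, smul_eq_mul, Pi.zero_apply, mul_zero,
            Finset.sum_const_zero, add_zero, zero_add, Prod.snd_zero]
          by_cases hj : j = 0
          · subst hj
            simp only [eq_self_iff_true, if_true]
            rw [← Finset.sum_subtype (univ.filter (fun i => ws i ≠ 0)) hmemne
              (fun i => zs i * (p * Real.sign (ws i) * |ws i| ^ (p-1)))]
            rw [← Finset.sum_subtype (univ.filter (fun j' => ls j' = 0)) hmemls
              (fun j' => -bs j' * (Pi.single j' 1 : Fin r → ℝ) (0 : Fin r))]
            have hIW : (∑ i ∈ univ.filter (fun i => ws i ≠ 0),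
                zs i * (p * Real.sign (ws i) * |ws i| ^ (p-1))) = bs 0 := by
              rw [← hC2, Finset.mul_sum]
              apply Finset.sum_congr rfl
              intro i _
              ring
            have hJL : (∑ j' ∈ univ.filter (fun j' => ls j' = 0),
                -bs j' * (Pi.single j' 1 : Fin r → ℝ) (0 : Fin r)) = 0 := by
              apply Finset.sum_eq_zero
              intro j' hj'
              have hls' : ls j' = 0 := (Finset.mem_filter.1 hj').2
              have hne : (0 : Fin r) ≠ j' := by
                intro h
                rw [← h] at hls'
                exact hls0.ne' hls'
              rw [Pi.single_eq_of_ne hne, mul_zero]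
            rw [hIW, hJL, add_zero, hbs0]
          · simp only [if_neg hj]
            rw [← Finset.sum_subtype (univ.filter (fun i => ws i ≠ 0)) hmemne
              (fun i => zs i * pd (R j) ws i)]
            rw [← Finset.sum_subtype (univ.filter (fun j' => ls j' = 0)) hmemls
              (fun j' => -bs j' * (Pi.single j' 1 : Fin r → ℝ) j)]
            have hIW : (∑ i ∈ univ.filter (fun i => ws i ≠ 0), zs i * pd (R j) ws i)
                = bs j := by
              rw [hRk j]
              exact hC4 j hj
            have hJL : (∑ j' ∈ univ.filter (fun j' => ls j' = 0),
                -bs j' * (Pi.single j' 1 : Fin r → ℝ) j)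
                = if j ∈ univ.filter (fun j' => ls j' = 0) then -bs j else 0 := by
              have hterm : ∀ j' : Fin r, -bs j' * (Pi.single j' 1 : Fin r → ℝ) j
                  = if j = j' then -bs j' else 0 := by
                intro j'
                rw [Pi.single_apply]
                by_cases h : j = j'
                · simp [h]
                · simp [h]
              simp only [hterm]
              rw [Finset.sum_ite_eq]
            rw [hIW, hJL]
            by_cases hlsj : ls j = 0
            · rw [if_pos (by simp [hlsj])]
              ring
            · rw [if_neg (by simp [hlsj]), hbsnz j hlsj]
              ring
      have hallz := Fintype.linearIndependent_iff.1 hLI co hcomb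
      have hzs_all : ∀ i, zs i = 0 := by
        intro i
        by_cases h : ws i = 0
        · exact hC1 i h
        · exact hallz (Sum.inl ⟨i, h⟩)
      have hbs_all : ∀ j, bs j = 0 := by
        intro j
        by_cases h : ls j = 0
        · have := hallz (Sum.inr (Sum.inr ⟨j, h⟩))
          simpa [hco] using this
        · exact hbsnz j h
      rw [Finset.sum_eq_zero (fun i _ => by rw [hzs_all i, abs_zero]),
        Finset.sum_eq_zero (fun j _ => by rw [hbs_all j, abs_zero]), add_zero] at hone
      norm_num at hone
    · -- bounded case: the tuple converges along U
      have hzb : ∀ i, ∀ᶠ k in (↑U : Filter ℕ), |zeta (k+1) i| ≤ b := by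
        intro i
        filter_upwards [hNb] with k hk
        have h3 := Finset.single_le_sum (f := fun i' => |zeta (k+1) i'|)
          (fun _ _ => abs_nonneg _) (mem_univ i)
        have h2 : 0 ≤ ∑ j, |beta (k+1) j| := Finset.sum_nonneg fun _ _ => abs_nonneg _
        have h4 : N k = 1 + (∑ i', |zeta (k+1) i'|) + (∑ j, |beta (k+1) j|) := by
          simp only [hN]
        have h5 : N k ≤ b := le_trans (le_abs_self _) hk
        linarith
      have hbb : ∀ j, ∀ᶠ k in (↑U : Filter ℕ), |beta (k+1) j| ≤ b := by
        intro j
        filter_upwards [hNb] with k hk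
        have h3 := Finset.single_le_sum (f := fun j' => |beta (k+1) j'|)
          (fun _ _ => abs_nonneg _) (mem_univ j)
        have h2 : 0 ≤ ∑ i, |zeta (k+1) i| := Finset.sum_nonneg fun _ _ => abs_nonneg _
        have h4 : N k = 1 + (∑ i, |zeta (k+1) i|) + (∑ j', |beta (k+1) j'|) := by
          simp only [hN]
        have h5 : N k ≤ b := le_trans (le_abs_self _) hk
        linarith
      have hexz : ∀ i, ∃ li, Tendsto (fun k => zeta (k+1) i) (↑U) (𝓝 li) := by
        intro i
        obtain ⟨l, _, hl⟩ := ult_lim U (hzb i)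
        exact ⟨l, hl⟩
      choose zs hzs using hexz
      have hexb : ∀ j, ∃ lj, Tendsto (fun k => beta (k+1) j) (↑U) (𝓝 lj) := by
        intro j
        obtain ⟨l, _, hl⟩ := ult_lim U (hbb j)
        exact ⟨l, hl⟩
      choose bs hbs using hexb
      have hZt : Tendsto (fun k => zeta (k+1)) (↑U) (𝓝 zs) := tendsto_pi_nhds.2 hzs
      have hBt : Tendsto (fun k => beta (k+1)) (↑U) (𝓝 bs) := tendsto_pi_nhds.2 hbs
      have htt : Tendsto (fun k => (w (k+1), lam (k+1), zeta (k+1), beta (k+1))) (↑U)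
          (𝓝 (ws, ls, zs, bs)) :=
        hW.prodMk_nhds (hΛ.prodMk_nhds (hZt.prodMk_nhds hBt))
      exact ⟨(ws, ls, zs, bs), MapClusterPt.of_comp (hshift.mono_left hUat) htt.mapClusterPt⟩
  · -- part 2
    intro ws ls zs bs hq
    set tup : ℕ → (Fin n → ℝ) × (Fin r → ℝ) × (Fin n → ℝ) × (Fin r → ℝ) :=
      fun k => (w k, lam k, zeta k, beta k) with htup
    have hmap : Filter.map (fun k => tup (k+1)) atTop = Filter.map tup atTop := by
      rw [show (fun k => tup (k+1)) = tup ∘ (fun k : ℕ => k + 1) from rfl, ← Filter.map_map,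
        Filter.map_add_atTop_eq_nat]
    have hq' : MapClusterPt (ws, ls, zs, bs) atTop (fun k => tup (k+1)) := by
      rw [mapClusterPt_def, hmap]
      exact hq.clusterPt
    obtain ⟨U, hUat, hUt⟩ := mapClusterPt_iff_ultrafilter.1 hq'
    have hW : Tendsto (fun k => w (k+1)) (↑U) (𝓝 ws) :=
      (continuous_fst.tendsto _).comp hUt
    have hΛ : Tendsto (fun k => lam (k+1)) (↑U) (𝓝 ls) :=
      ((continuous_fst.comp continuous_snd).tendsto _).comp hUt
    have hZr : Tendsto (fun k => zeta (k+1)) (↑U) (𝓝 zs) :=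
      ((continuous_fst.comp (continuous_snd.comp continuous_snd)).tendsto _).comp hUt
    have hBr : Tendsto (fun k => beta (k+1)) (↑U) (𝓝 bs) :=
      ((continuous_snd.comp (continuous_snd.comp continuous_snd)).tendsto _).comp hUt
    have hWL : Tendsto (fun k => (w (k+1), lam (k+1))) (↑U) (𝓝 (ws, ls)) :=
      hW.prodMk_nhds hΛ
    have hclus : MapClusterPt (ws, ls) atTop (fun k => (w k, lam k)) :=
      MapClusterPt.of_comp (hshift.mono_left hUat) hWL.mapClusterPt
    have hls0 : 0 < ls 0 := by
      have hevU : ∀ᶠ k in (↑U : Filter ℕ), L / 2 ≤ lam (k+1) 0 :=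
        (hev1.filter_mono hUat).mono (fun k hk => hk.le)
      have := ge_of_tendsto (tendsto_pi_nhds.1 hΛ 0) hevU
      linarith
    have hA3' : p = 1 → ∀ i, ws i = 0 → ls 0 ≠ |pd (fun x => G x ls) ws i| :=
      fun hpeq i hwsi => hA3 hpeq ws ls hclus i hwsi
    have hσ1 : Tendsto (fun _ : ℕ => (1:ℝ)) (↑U) (𝓝 1) := tendsto_const_nhds
    have hZ : Tendsto (fun k => (1:ℝ) • zeta (k+1)) (↑U) (𝓝 zs) := by simpa using hZr
    have hB : Tendsto (fun k => (1:ℝ) • beta (k+1)) (↑U) (𝓝 bs) := by simpa using hBr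
    obtain ⟨hC1, hC2, _⟩ := aux_limits U hp hp1 f g R hfC hgC hRC G hG w lam zeta beta μ εhat
      hμpos hKKT (fun _ => 1) (fun _ => one_pos) hls0 hW hΛ hZ hB hσ1
      (hμ.mono_left hUat) (hε.mono_left hUat) hA3'
    exact ⟨hC1, hC2⟩
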